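/- For n ∈ ℕ₀, the limit as z → -n of (ψ'(z) - ψ(z)²)/Γ(z) equals (-1)ⁿ · 2 · n! · ψ(1+n), where ψ is the digamma function. -/

import Mathlib

open Filter Topology

/-- The digamma function ψ = Γ'/Γ on ℂ. -/
noncomputable def digamma (z : ℂ) : ℂ := deriv Complex.Gamma z / Complex.Gamma z

namespace DigammaAux

lemma analyticAt_deriv {f : ℂ → ℂ} {z : ℂ} (h : AnalyticAt ℂ f z) :
    AnalyticAt ℂ (deriv f) z := by
  obtain ⟨t, ht, h2⟩ := h.eventually_analyticAt.exists_mem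
  exact AnalyticOnNhd.deriv (fun y hy => h2 y hy) z (mem_of_mem_nhds ht)

/-- The reciprocal Gamma function, an entire function. -/
noncomputable def g : ℂ → ℂ := fun z => (Complex.Gamma z)⁻¹

lemma g_diff : Differentiable ℂ g := Complex.differentiable_one_div_Gamma

lemma g_analyticAt (z : ℂ) : AnalyticAt ℂ g z := g_diff.analyticAt z

lemma dg_analyticAt (z : ℂ) : AnalyticAt ℂ (deriv g) z := analyticAt_deriv (g_analyticAt z)

lemma d2g_analyticAt (z : ℂ) : AnalyticAt ℂ (deriv (deriv g)) z :=
  analyticAt_deriv (dg_analyticAt z)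

lemma g_rec (z : ℂ) : g z = z * g (z + 1) := by
  rcases eq_or_ne z 0 with rfl | hz
  · simp [g, Complex.Gamma_zero]
  · rw [g, g, Complex.Gamma_add_one z hz, mul_inv, ← mul_assoc, mul_inv_cancel₀ hz, one_mul]

lemma dg_rec (z : ℂ) : deriv g z = g (z + 1) + z * deriv g (z + 1) := by
  have hfe : g = fun w => w * g (w + 1) := funext g_rec
  have h1 : DifferentiableAt ℂ (fun w : ℂ => g (w + 1)) z :=
    (g_diff (z + 1)).comp z (f := fun w : ℂ => w + 1) (differentiableAt_id.add_const (1 : ℂ))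
  conv_lhs => rw [hfe]
  rw [deriv_fun_mul differentiableAt_fun_id h1, deriv_id'', one_mul, deriv_comp_add_const]

lemma d2g_rec (z : ℂ) : deriv (deriv g) z = 2 * deriv g (z + 1) + z * deriv (deriv g) (z + 1) := by
  have hfe : deriv g = fun w => g (w + 1) + w * deriv g (w + 1) := funext dg_rec
  have h1 : DifferentiableAt ℂ (fun w : ℂ => g (w + 1)) z :=
    (g_diff (z + 1)).comp z (f := fun w : ℂ => w + 1) (differentiableAt_id.add_const (1 : ℂ))
  have h2 : DifferentiableAt ℂ (fun w : ℂ => deriv g (w + 1)) z :=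
    ((dg_analyticAt (z + 1)).differentiableAt).comp z (differentiableAt_id.add_const 1)
  conv_lhs => rw [hfe]
  rw [deriv_fun_add h1 (differentiableAt_fun_id.fun_mul h2),
    deriv_fun_mul differentiableAt_fun_id h2, deriv_id'', one_mul,
    deriv_comp_add_const, deriv_comp_add_const (deriv g) 1]
  ring

lemma g_one : g 1 = 1 := by simp [g, Complex.Gamma_one]

lemma g_neg_nat (n : ℕ) : g (-(n : ℂ)) = 0 := by
  simp [g, Complex.Gamma_neg_nat_eq_zero]

lemma dg_neg_nat (n : ℕ) : deriv g (-(n : ℂ)) = (-1) ^ n * n.factorial := by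
  induction n with
  | zero =>
      have := dg_rec 0
      simpa [g_one] using this
  | succ n ih =>
      have h := dg_rec (-((n : ℂ) + 1))
      have e1 : -((n : ℂ) + 1) + 1 = -(n : ℂ) := by ring
      rw [e1, g_neg_nat, ih] at h
      rw [show (-((n + 1 : ℕ) : ℂ)) = -((n : ℂ) + 1) by push_cast; ring, h]
      push_cast [Nat.factorial_succ]
      ring

lemma pos_ne_neg_nat (n : ℕ) : ∀ m : ℕ, (1 : ℂ) + n ≠ -(m : ℂ) := by
  intro m h
  have := congrArg Complex.re h
  simp at this
  have h1 : (0:ℝ) ≤ (n:ℝ) := Nat.cast_nonneg n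
  have h2 : (0:ℝ) ≤ (m:ℝ) := Nat.cast_nonneg m
  linarith

lemma Gamma_pos_ne_zero (n : ℕ) : Complex.Gamma (1 + (n : ℂ)) ≠ 0 :=
  Complex.Gamma_ne_zero (pos_ne_neg_nat n)

lemma Gamma_pos_diff (n : ℕ) : DifferentiableAt ℂ Complex.Gamma (1 + (n : ℂ)) :=
  Complex.differentiableAt_Gamma _ (pos_ne_neg_nat n)

lemma Gamma_one_add_nat (n : ℕ) : Complex.Gamma (1 + (n : ℂ)) = n.factorial := by
  rw [add_comm]; exact Complex.Gamma_nat_eq_factorial n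

/-- digamma recurrence at positive integers -/
lemma digamma_rec (n : ℕ) :
    digamma (1 + (n : ℂ) + 1) = digamma (1 + (n : ℂ)) + (1 + (n : ℂ))⁻¹ := by
  set z : ℂ := 1 + (n : ℂ) with hz
  have hz0 : z ≠ 0 := by
    intro h
    have := congrArg Complex.re h
    simp [hz] at this
    have h1 : (0:ℝ) ≤ (n:ℝ) := Nat.cast_nonneg n
    linarith
  have hGz : Complex.Gamma z ≠ 0 := Gamma_pos_ne_zero n
  have hdz : DifferentiableAt ℂ Complex.Gamma z := Gamma_pos_diff n
  have hev : (fun w : ℂ => Complex.Gamma (w + 1)) =ᶠ[nhds z] fun w => w * Complex.Gamma w := by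
    filter_upwards [isOpen_ne.mem_nhds hz0] with w hw
    exact Complex.Gamma_add_one w hw
  have hd : deriv Complex.Gamma (z + 1) = Complex.Gamma z + z * deriv Complex.Gamma z := by
    have := hev.deriv_eq
    rw [deriv_comp_add_const Complex.Gamma 1 z] at this
    rw [this, deriv_fun_mul differentiableAt_fun_id hdz, deriv_id'', one_mul]
  have hG1 : Complex.Gamma (z + 1) = z * Complex.Gamma z := Complex.Gamma_add_one z hz0
  rw [digamma, digamma, hd, hG1]
  field_simp
  ring

lemma dg_pos (n : ℕ) : deriv g (1 + (n : ℂ)) = -digamma (1 + (n : ℂ)) / n.factorial := by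
  have h : deriv g (1 + (n : ℂ)) =
      -deriv Complex.Gamma (1 + (n : ℂ)) / Complex.Gamma (1 + (n : ℂ)) ^ 2 :=
    deriv_inv'' (Gamma_pos_diff n) (Gamma_pos_ne_zero n)
  rw [h, digamma, Gamma_one_add_nat]
  have hf : (n.factorial : ℂ) ≠ 0 := Nat.cast_ne_zero.mpr n.factorial_ne_zero
  field_simp

lemma d2g_neg_nat (n : ℕ) :
    deriv (deriv g) (-(n : ℂ)) = -2 * (-1) ^ n * n.factorial * digamma (1 + (n : ℂ)) := by
  induction n with
  | zero =>
      have h := d2g_rec 0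
      have h1 := dg_pos 0
      norm_num at h h1 ⊢
      rw [h, h1]
      ring
  | succ n ih =>
      have h := d2g_rec (-((n : ℂ) + 1))
      have e1 : -((n : ℂ) + 1) + 1 = -(n : ℂ) := by ring
      rw [e1, dg_neg_nat, ih] at h
      have hrec := digamma_rec n
      have hne : (1 : ℂ) + n ≠ 0 := by
        intro hh
        have := congrArg Complex.re hh
        simp at this
        have h1 : (0:ℝ) ≤ (n:ℝ) := Nat.cast_nonneg n
        linarith
      rw [show (-((n + 1 : ℕ) : ℂ)) = -((n : ℂ) + 1) by push_cast; ring, h,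
        show (1 : ℂ) + ((n+1 : ℕ) : ℂ) = 1 + (n:ℂ) + 1 by push_cast; ring, hrec]
      push_cast [Nat.factorial_succ]
      field_simp
      ring

lemma dist_neg_nat {n m : ℕ} (h : m ≠ n) : (1 : ℝ) ≤ dist (-(m : ℂ)) (-(n : ℂ)) := by
  rw [Complex.dist_eq]
  have e : (-(m : ℂ)) - (-(n : ℂ)) = ((n - m : ℤ) : ℂ) := by push_cast; ring
  have h' : (n : ℤ) - m ≠ 0 := sub_ne_zero.mpr (by exact_mod_cast h.symm)
  rw [e, Complex.norm_intCast]
  exact_mod_cast Int.one_le_abs h'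

lemma ne_all {n : ℕ} {z : ℂ} (h1 : dist z (-(n : ℂ)) < 1/2) (h2 : z ≠ -(n : ℂ)) (m : ℕ) :
    z ≠ -(m : ℂ) := by
  rcases eq_or_ne m n with rfl | hmn
  · exact h2
  · rintro rfl
    have := dist_neg_nat hmn
    linarith

lemma safe {n : ℕ} {z : ℂ} (h1 : dist z (-(n : ℂ)) < 1/2) (h2 : z ≠ -(n : ℂ)) :
    ∀ w : ℂ, dist w z < min (dist z (-(n : ℂ))) (1/4) → ∀ m : ℕ, w ≠ -(m : ℂ) := by
  intro w hw m
  rcases eq_or_ne m n with rfl | hmn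
  · rintro rfl
    rw [dist_comm] at hw
    have := min_le_left (dist z (-(m : ℂ))) (1/4)
    linarith
  · rintro rfl
    have hd := dist_neg_nat hmn
    have ht : dist (-(m : ℂ)) (-(n : ℂ)) ≤ dist (-(m : ℂ)) z + dist z (-(n : ℂ)) :=
      dist_triangle _ _ _
    have h4 : dist (-(m : ℂ)) z < 1/4 := by
      exact hw.trans_le (min_le_right _ _)
    linarith

lemma gamma_analyticAt {n : ℕ} {z : ℂ} (h1 : dist z (-(n : ℂ)) < 1/2) (h2 : z ≠ -(n : ℂ)) :
    AnalyticAt ℂ Complex.Gamma z := by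
  set δ := min (dist z (-(n : ℂ))) (1/4) with hδdef
  have hδ : 0 < δ := lt_min (dist_pos.mpr h2) (by norm_num)
  refine DifferentiableOn.analyticAt (s := Metric.ball z δ) ?_ (Metric.ball_mem_nhds z hδ)
  intro w hw
  exact (Complex.differentiableAt_Gamma w
    (safe h1 h2 w (Metric.mem_ball.mp hw))).differentiableWithinAt

lemma key {z : ℂ} (hA : AnalyticAt ℂ Complex.Gamma z) (hz : Complex.Gamma z ≠ 0) :
    (deriv digamma z - digamma z ^ 2) / Complex.Gamma z = -(deriv (deriv g) z) := by
  have hd1 : DifferentiableAt ℂ Complex.Gamma z := hA.differentiableAt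
  have hA' : AnalyticAt ℂ (deriv Complex.Gamma) z := analyticAt_deriv hA
  have hd2 : DifferentiableAt ℂ (deriv Complex.Gamma) z := hA'.differentiableAt
  have hdigdef : digamma = fun w => deriv Complex.Gamma w / Complex.Gamma w := rfl
  have hdig : deriv digamma z = (deriv (deriv Complex.Gamma) z * Complex.Gamma z -
      deriv Complex.Gamma z * deriv Complex.Gamma z) / Complex.Gamma z ^ 2 := by
    rw [hdigdef]; exact deriv_div hd2 hd1 hz
  have hev : deriv g =ᶠ[nhds z] fun w => -deriv Complex.Gamma w / Complex.Gamma w ^ 2 := by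
    filter_upwards [hA.eventually_analyticAt, hd1.continuousAt.eventually_ne hz] with w hw1 hw2
    exact deriv_inv'' hw1.differentiableAt hw2
  have hG2 : deriv (deriv g) z =
      deriv (fun w => -deriv Complex.Gamma w / Complex.Gamma w ^ 2) z := hev.deriv_eq
  rw [hG2, deriv_fun_div hd2.fun_neg (hd1.fun_pow 2) (pow_ne_zero 2 hz), deriv.fun_neg,
    deriv_fun_pow hd1 2, hdig, show digamma z = deriv Complex.Gamma z / Complex.Gamma z from rfl]
  field_simp
  ring

end DigammaAux

theorem trigamma_sub_digamma_sq_div_Gamma_tendsto (n : ℕ) :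
    Tendsto (fun z : ℂ => (deriv digamma z - (digamma z) ^ 2) / Complex.Gamma z)
      (𝓝[≠] (-(n : ℂ)))
      (𝓝 ((-1) ^ n * 2 * (n.factorial : ℂ) * digamma (1 + (n : ℂ)))) := by
  have hcont : ContinuousAt (fun z => -(deriv (deriv DigammaAux.g) z)) (-(n : ℂ)) :=
    ((DigammaAux.d2g_analyticAt (-(n : ℂ))).continuousAt).neg
  have hval : -(deriv (deriv DigammaAux.g) (-(n : ℂ))) =
      (-1) ^ n * 2 * (n.factorial : ℂ) * digamma (1 + (n : ℂ)) := by
    rw [DigammaAux.d2g_neg_nat]; ring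
  have hev : ∀ᶠ z in 𝓝[≠] (-(n : ℂ)),
      (deriv digamma z - digamma z ^ 2) / Complex.Gamma z =
        -(deriv (deriv DigammaAux.g) z) := by
    have hball : Metric.ball (-(n : ℂ)) (1/2) ∈ 𝓝 (-(n : ℂ)) :=
      Metric.ball_mem_nhds _ (by norm_num)
    filter_upwards [mem_nhdsWithin_of_mem_nhds hball, self_mem_nhdsWithin] with z hz1 hz2
    have hz1' : dist z (-(n : ℂ)) < 1/2 := Metric.mem_ball.mp hz1
    have hz2' : z ≠ -(n : ℂ) := hz2
    exact DigammaAux.key (DigammaAux.gamma_analyticAt hz1' hz2')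
      (Complex.Gamma_ne_zero (DigammaAux.ne_all hz1' hz2'))
  rw [← hval]
  exact Tendsto.congr' (hev.mono fun z hz => hz.symm) (hcont.tendsto.mono_left nhdsWithin_le_nhds)
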